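/- For a = 1 and β ≥ 0, the map F(T) = T / (1 + β‖T‖) on a finite-dimensional real inner product space is monotone: (F(T₁) − F(T₂)) ⬝ (T₁ − T₂) ≥ 0 for all T₁, T₂. -/

import Mathlib

theorem strain_limiting_monotone
    {V : Type*} [NormedAddCommGroup V] [InnerProductSpace ℝ V] [FiniteDimensional ℝ V]
    (β : ℝ) (hβ : 0 ≤ β) (F : V → V) (hF : ∀ T, F T = (1 + β * ‖T‖)⁻¹ • T) :
    ∀ T₁ T₂ : V, (0:ℝ) ≤ inner ℝ (F T₁ - F T₂) (T₁ - T₂) := by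
  intro T₁ T₂
  rw [hF, hF]
  set a := ‖T₁‖ with ha
  set b := ‖T₂‖ with hb
  have hda : (0:ℝ) < 1 + β * a := by positivity
  have hdb : (0:ℝ) < 1 + β * b := by positivity
  set c₁ := (1 + β * a)⁻¹ with hc₁
  set c₂ := (1 + β * b)⁻¹ with hc₂
  have hc₁p : (0:ℝ) < c₁ := by positivity
  have hc₂p : (0:ℝ) < c₂ := by positivity
  have h₁ : c₁ * (1 + β * a) = 1 := inv_mul_cancel₀ hda.ne'
  have h₂ : c₂ * (1 + β * b) = 1 := inv_mul_cancel₀ hdb.ne'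
  have hip : (inner ℝ T₁ T₂ : ℝ) ≤ a * b := real_inner_le_norm T₁ T₂
  have expand : (inner ℝ (c₁ • T₁ - c₂ • T₂) (T₁ - T₂) : ℝ)
      = c₁ * a ^ 2 + c₂ * b ^ 2 - (c₁ + c₂) * inner ℝ T₁ T₂ := by
    simp only [inner_sub_left, inner_sub_right, real_inner_smul_left, real_inner_smul_right, real_inner_self_eq_norm_sq,
      real_inner_comm T₂ T₁]
    ring
  rw [expand]
  nlinarith [sq_nonneg (a - b), mul_pos hc₁p hc₂p, mul_nonneg (mul_nonneg hc₁p.le hc₂p.le) (sq_nonneg (a - b)), mul_le_mul_of_nonneg_left hip (by positivity : (0:ℝ) ≤ c₁ + c₂), h₁, h₂, mul_nonneg hβ (norm_nonneg T₁), mul_nonneg hβ (norm_nonneg T₂)]
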